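/- Let R be a commutative ring, n ≥ 3, and let α be a right invertible 2×n matrix over R with rows (a_1,…,a_n) and (b_1,…,b_n). Then the two rows are elementarily equivalent: there exists ε ∈ E_n(R) with (a_1,…,a_n)ε = (b_1,…,b_n). -/
import Mathlib


open Matrix Polynomial

/-- `ElemGroup R n` is the elementary subgroup `E_n(R)`: generated by the elementary
matrices `e_ij(λ) = I + λ E_ij`, `i ≠ j`. -/
def ElemGroup (R : Type*) [CommRing R] (n : ℕ) : Submonoid (Matrix (Fin n) (Fin n) R) :=
  Submonoid.closure {A | ∃ (i j : Fin n) (c : R), i ≠ j ∧ A = Matrix.transvection i j c}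

namespace Stmt5Aux

variable {R : Type*} [CommRing R] {n : ℕ}

lemma vmv_mul (u v x y : Fin n → R) :
    vecMulVec u v * vecMulVec x y = (v ⬝ᵥ x) • vecMulVec u y := by
  ext i j
  simp only [Matrix.mul_apply, vecMulVec_apply, Matrix.smul_apply, smul_eq_mul, dotProduct,
    Finset.sum_mul]
  exact Finset.sum_congr rfl fun k _ => by ring

lemma vmv_add_right (u v w : Fin n → R) :
    vecMulVec u (v + w) = vecMulVec u v + vecMulVec u w := by
  ext i j; simp [vecMulVec_apply, mul_add]

lemma vmv_add_left (u v w : Fin n → R) :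
    vecMulVec (u + v) w = vecMulVec u w + vecMulVec v w := by
  ext i j; simp [vecMulVec_apply, add_mul]

lemma vmv_zero_right (u : Fin n → R) : vecMulVec u (0 : Fin n → R) = 0 := by
  ext i j; simp [vecMulVec_apply]

lemma vmv_zero_left (u : Fin n → R) : vecMulVec (0 : Fin n → R) u = 0 := by
  ext i j; simp [vecMulVec_apply]

lemma oneAdd_mul_oneAdd (u v x y : Fin n → R) (h : v ⬝ᵥ x = 0) :
    (1 + vecMulVec u v) * (1 + vecMulVec x y)
      = 1 + (vecMulVec u v + vecMulVec x y) := by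
  have h0 : vecMulVec u v * vecMulVec x y = 0 := by
    rw [vmv_mul, h, zero_smul]
  have expand : (1 + vecMulVec u v) * (1 + vecMulVec x y)
      = 1 + vecMulVec u v + vecMulVec x y + vecMulVec u v * vecMulVec x y := by
    noncomm_ring
  rw [expand, h0, add_zero, add_assoc]

/-- atom: `1 + single i c ⊗ single j d` is a transvection when `i ≠ j`. -/
lemma atom_mem (i j : Fin n) (hij : i ≠ j) (c d : R) :
    1 + vecMulVec (Pi.single i c) (Pi.single j d) ∈ ElemGroup R n := by
  apply Submonoid.subset_closure
  refine ⟨i, j, c * d, hij, ?_⟩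
  rw [Matrix.transvection]
  congr 1
  ext r s
  rw [vecMulVec_apply]
  simp only [Matrix.single, Matrix.of_apply, Pi.single_apply]
  by_cases hr : r = i <;> by_cases hs : s = j
  · subst hr; subst hs; simp
  · subst hr; simp [hs, Ne.symm hs]
  · subst hs; simp [hr, Ne.symm hr]
  · simp [hr, hs, Ne.symm hr, Ne.symm hs]

/-- sum in the right factor -/
lemma mem_sum_right {ι : Type*} (u : Fin n → R) (s : Finset ι) (g : ι → Fin n → R)
    (hcross : ∀ l ∈ s, g l ⬝ᵥ u = 0)
    (hmem : ∀ l ∈ s, 1 + vecMulVec u (g l) ∈ ElemGroup R n) :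
    1 + vecMulVec u (∑ l ∈ s, g l) ∈ ElemGroup R n := by
  induction s using Finset.cons_induction with
  | empty => simpa [vmv_zero_right] using one_mem (ElemGroup R n)
  | cons a s ha ih =>
    rw [Finset.sum_cons, vmv_add_right, ← oneAdd_mul_oneAdd u (g a) u
      (∑ l ∈ s, g l) (hcross a (Finset.mem_cons_self a s))]
    exact mul_mem (hmem a (Finset.mem_cons_self a s))
      (ih (fun l hl => hcross l (Finset.mem_cons_of_mem hl))
          (fun l hl => hmem l (Finset.mem_cons_of_mem hl)))

/-- sum in the left factor -/
lemma mem_sum_left {ι : Type*} (v : Fin n → R) (s : Finset ι) (g : ι → Fin n → R)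
    (hcross : ∀ l ∈ s, v ⬝ᵥ g l = 0)
    (hmem : ∀ l ∈ s, 1 + vecMulVec (g l) v ∈ ElemGroup R n) :
    1 + vecMulVec (∑ l ∈ s, g l) v ∈ ElemGroup R n := by
  induction s using Finset.cons_induction with
  | empty => simpa [vmv_zero_left] using one_mem (ElemGroup R n)
  | cons a s ha ih =>
    rw [Finset.sum_cons, vmv_add_left, add_comm (vecMulVec (g a) v),
      ← oneAdd_mul_oneAdd (∑ l ∈ s, g l) v (g a) v (hcross a (Finset.mem_cons_self a s))]
    exact mul_mem
      (ih (fun l hl => hcross l (Finset.mem_cons_of_mem hl))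
          (fun l hl => hmem l (Finset.mem_cons_of_mem hl)))
      (hmem a (Finset.mem_cons_self a s))

/-- a single-row perturbation `1 + single i t ⊗ w` with `w i = 0` is elementary. -/
lemma row_mem (i : Fin n) (t : R) (w : Fin n → R) (hw : w i = 0) :
    1 + vecMulVec (Pi.single i t) w ∈ ElemGroup R n := by
  have hsum : w = ∑ l : Fin n, Pi.single l (w l) := (Finset.univ_sum_single w).symm
  rw [hsum]
  apply mem_sum_right
  · intro l _
    rw [single_dotProduct, Pi.single_apply]
    by_cases h : l = i
    · subst h; simp [hw]
    · simp [h]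
  · intro l _
    by_cases h : l = i
    · subst h; rw [hw, Pi.single_zero, vmv_zero_right, add_zero]; exact one_mem _
    · exact atom_mem i l (Ne.symm h) t (w l)

/-- a single-column perturbation `1 + u ⊗ single k t` with `u k = 0` is elementary. -/
lemma col_mem (k : Fin n) (t : R) (u : Fin n → R) (hu : u k = 0) :
    1 + vecMulVec u (Pi.single k t) ∈ ElemGroup R n := by
  have hsum : u = ∑ l : Fin n, Pi.single l (u l) := (Finset.univ_sum_single u).symm
  rw [hsum]
  apply mem_sum_left
  · intro l _
    rw [dotProduct_single, Pi.single_apply]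
    by_cases h : l = k
    · simp [h, hu]
    · simp [h]
  · intro l _
    by_cases h : l = k
    · subst h; rw [hu, Pi.single_zero, vmv_zero_left, add_zero]; exact one_mem _
    · exact atom_mem l k h (u l) t

/-- the commutator identity. -/
lemma comm_identity (X Y : Fin n → R) (k : Fin n) (hX : X k = 0) (hY : Y k = 0)
    (hYX : Y ⬝ᵥ X = 0) :
    1 + vecMulVec X Y
      = (1 + vecMulVec X (Pi.single k 1)) * (1 + vecMulVec (Pi.single k 1) Y)
        * (1 + vecMulVec (-X) (Pi.single k 1)) * (1 + vecMulVec (Pi.single k 1) (-Y)) := by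
  set δ : Fin n → R := Pi.single k 1 with hδ
  set A := vecMulVec X δ with hA
  set B := vecMulVec δ Y with hB
  set M := vecMulVec X Y with hM
  have hδX : δ ⬝ᵥ X = 0 := by rw [hδ, single_dotProduct, one_mul, hX]
  have hYδ : Y ⬝ᵥ δ = 0 := by rw [hδ, dotProduct_single, mul_one, hY]
  have hδδ : δ ⬝ᵥ δ = 1 := by rw [hδ, dotProduct_single, mul_one, Pi.single_eq_same]
  have hAA : A * A = 0 := by rw [hA, vmv_mul, hδX, zero_smul]
  have hBB : B * B = 0 := by rw [hB, vmv_mul, hYδ, zero_smul]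
  have hAB : A * B = M := by rw [hA, hB, hM, vmv_mul, hδδ, one_smul]
  have hBA : B * A = 0 := by rw [hA, hB, vmv_mul, hYX, zero_smul]
  have hAM : A * M = 0 := by rw [hA, hM, vmv_mul, hδX, zero_smul]
  have hMA : M * A = 0 := by rw [hA, hM, vmv_mul, hYX, zero_smul]
  have hBM : B * M = 0 := by rw [hB, hM, vmv_mul, hYX, zero_smul]
  have hMB : M * B = 0 := by rw [hB, hM, vmv_mul, hYδ, zero_smul]
  have hMM : M * M = 0 := by rw [hM, vmv_mul, hYX, zero_smul]
  have hnegA : vecMulVec (-X) δ = -A := by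
    rw [hA]; ext i j; simp [vecMulVec_apply]
  have hnegB : vecMulVec δ (-Y) = -B := by
    rw [hB]; ext i j; simp [vecMulVec_apply]
  rw [hnegA, hnegB]
  symm
  have h1 : (1 + A) * (1 + B) = 1 + (A + B + M) := by
    have : (1 + A) * (1 + B) = 1 + A + B + A * B := by noncomm_ring
    rw [this, hAB]; abel
  have h2 : (1 + -A) * (1 + -B) = 1 + (-A + -B + M) := by
    have : (1 + -A) * (1 + -B) = 1 + -A + -B + A * B := by noncomm_ring
    rw [this, hAB]; abel
  have h3 : (A + B + M) * (-A + -B + M) = -M := by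
    have expand : (A + B + M) * (-A + -B + M)
        = -(A*A) - A*B + A*M - B*A - B*B + B*M - M*A - M*B + M*M := by noncomm_ring
    rw [expand, hAA, hBB, hMM, hAB, hBA, hAM, hMA, hBM, hMB]; abel
  calc (1 + A) * (1 + B) * (1 + -A) * (1 + -B)
      = ((1 + A) * (1 + B)) * ((1 + -A) * (1 + -B)) := by rw [mul_assoc]
    _ = (1 + (A + B + M)) * (1 + (-A + -B + M)) := by rw [h1, h2]
    _ = 1 + (A + B + M) + (-A + -B + M) + (A + B + M) * (-A + -B + M) := by noncomm_ring
    _ = 1 + M := by rw [h3]; abel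

/-- Lemma B: Suslin's special elementary matrices. -/
lemma lemB (hn : 3 ≤ n) (i j : Fin n) (hij : i ≠ j) (c : R) (v : Fin n → R) :
    1 + vecMulVec (Pi.single i (c * v j) - Pi.single j (c * v i)) v ∈ ElemGroup R n := by
  -- find a third index k
  obtain ⟨k, hk'⟩ : (({i, j} : Finset (Fin n))ᶜ).Nonempty := by
    rw [← Finset.card_pos, Finset.card_compl]
    have h1 : ({i, j} : Finset (Fin n)).card ≤ 2 :=
      le_trans (Finset.card_insert_le i {j}) (by simp)
    simp only [Fintype.card_fin]
    omega
  have hk : k ∉ ({i, j} : Finset (Fin n)) := Finset.mem_compl.mp hk'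
  have hki : k ≠ i := by intro h; apply hk; simp [h]
  have hkj : k ≠ j := by intro h; apply hk; simp [h]
  set X : Fin n → R := Pi.single i (c * v j) - Pi.single j (c * v i) with hXdef
  have hXk : X k = 0 := by
    simp [hXdef, Pi.single_apply, hki, hkj]
  have hXi : X i = c * v j := by
    simp [hXdef, Pi.single_apply, hij]
  have hXj : X j = -(c * v i) := by
    simp [hXdef, Pi.single_apply, Ne.symm hij]
  set v₁ : Fin n → R := Pi.single i (v i) + Pi.single j (v j) with hv1
  set v₂ : Fin n → R := v - v₁ with hv2
  have hv1i : v₁ i = v i := by simp [hv1, Pi.single_apply, hij]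
  have hv1j : v₁ j = v j := by simp [hv1, Pi.single_apply, Ne.symm hij]
  have hv1k : v₁ k = 0 := by simp [hv1, Pi.single_apply, hki, hkj]
  have hv2i : v₂ i = 0 := by simp [hv2, hv1i]
  have hv2j : v₂ j = 0 := by simp [hv2, hv1j]
  have hdotX : ∀ w : Fin n → R, w ⬝ᵥ X = w i * (c * v j) - w j * (c * v i) := by
    intro w
    rw [hXdef, dotProduct_sub, dotProduct_single, dotProduct_single]
  have hv2X : v₂ ⬝ᵥ X = 0 := by rw [hdotX, hv2i, hv2j]; ring
  have hv1X : v₁ ⬝ᵥ X = 0 := by rw [hdotX, hv1i, hv1j]; ring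
  have hsplit : 1 + vecMulVec X v
      = (1 + vecMulVec X v₂) * (1 + vecMulVec X v₁) := by
    have hv12 : v₂ + v₁ = v := by rw [hv2]; abel
    rw [oneAdd_mul_oneAdd X v₂ X v₁ hv2X, ← vmv_add_right, hv12]
  rw [hsplit]
  apply mul_mem
  · -- factor A
    have hXsum : X = Pi.single i (c * v j) + Pi.single j (-(c * v i)) := by
      rw [hXdef, sub_eq_add_neg, ← Pi.single_neg]
    have hsplitA : 1 + vecMulVec X v₂
        = (1 + vecMulVec (Pi.single i (c * v j)) v₂)
          * (1 + vecMulVec (Pi.single j (-(c * v i))) v₂) := by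
      rw [oneAdd_mul_oneAdd _ v₂ _ v₂ (by rw [dotProduct_single, hv2j, zero_mul]),
        ← vmv_add_left, ← hXsum]
    rw [hsplitA]
    exact mul_mem (row_mem i _ v₂ hv2i) (row_mem j _ v₂ hv2j)
  · -- factor B via commutator
    rw [comm_identity X v₁ k hXk hv1k hv1X]
    refine mul_mem (mul_mem (mul_mem ?_ ?_) ?_) ?_
    · exact col_mem k 1 X hXk
    · exact row_mem k 1 v₁ hv1k
    · exact col_mem k 1 (-X) (by simp [hXk])
    · exact row_mem k 1 (-v₁) (by simp [hv1k])

/-- Lemma C (Suslin's lemma): `1 + u ⊗ v ∈ E_n(R)` provided `v ⬝ᵥ u = 0` and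
`v` is unimodular, `n ≥ 3`. -/
lemma memC (hn : 3 ≤ n) (u v w : Fin n → R) (hvu : v ⬝ᵥ u = 0) (hvw : v ⬝ᵥ w = 1) :
    1 + vecMulVec u v ∈ ElemGroup R n := by
  set f : Fin n × Fin n → Fin n → R := fun p =>
    Pi.single p.1 ((w p.2 * u p.1) * v p.2) - Pi.single p.2 ((w p.2 * u p.1) * v p.1) with hf
  have hdecomp : u = ∑ p : Fin n × Fin n, f p := by
    funext l
    rw [Finset.sum_apply]
    have e : ∀ p : Fin n × Fin n, f p l
        = (if l = p.1 then w p.2 * u p.1 * v p.2 else 0)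
          - (if l = p.2 then w p.2 * u p.1 * v p.1 else 0) := by
      intro p
      simp only [hf, Pi.sub_apply, Pi.single_apply, mul_assoc]
    rw [Finset.sum_congr rfl fun p _ => e p, Finset.sum_sub_distrib,
      Fintype.sum_prod_type, Fintype.sum_prod_type]
    have t1 : (∑ i : Fin n, ∑ j : Fin n, if l = i then w j * u i * v j else 0)
        = u l * (v ⬝ᵥ w) := by
      rw [Finset.sum_comm]
      have h' : ∀ j : Fin n, (∑ i : Fin n, if l = i then w j * u i * v j else 0)
          = w j * u l * v j := by
        intro j
        rw [Finset.sum_ite_eq Finset.univ l fun i => w j * u i * v j]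
        simp
      rw [Finset.sum_congr rfl fun j _ => h' j]
      simp only [dotProduct, Finset.mul_sum]
      exact Finset.sum_congr rfl fun j _ => by ring
    have t2 : (∑ i : Fin n, ∑ j : Fin n, if l = j then w j * u i * v i else 0)
        = w l * (v ⬝ᵥ u) := by
      have h' : ∀ i : Fin n, (∑ j : Fin n, if l = j then w j * u i * v i else 0)
          = w l * u i * v i := by
        intro i
        rw [Finset.sum_ite_eq Finset.univ l fun j => w j * u i * v i]
        simp
      rw [Finset.sum_congr rfl fun i _ => h' i]
      simp only [dotProduct, Finset.mul_sum]
      exact Finset.sum_congr rfl fun i _ => by ring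
    rw [t1, t2, hvw, hvu, mul_one, mul_zero, sub_zero]
  rw [hdecomp]
  apply mem_sum_left
  · intro p _
    rw [hf]
    simp only [dotProduct_sub, dotProduct_single]
    ring
  · intro p _
    by_cases hp : p.1 = p.2
    · have hzero : f p = 0 := by
        rw [hf]; simp only [hp]; abel
      rw [hzero, vmv_zero_left, add_zero]; exact one_mem _
    · have := lemB hn p.1 p.2 hp (w p.2 * u p.1) v
      simpa only [hf] using this

lemma vecMul_vmv (a u v : Fin n → R) :
    Matrix.vecMul a (vecMulVec u v) = (a ⬝ᵥ u) • v := by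
  funext j
  simp only [Matrix.vecMul, dotProduct, vecMulVec_apply, Pi.smul_apply, smul_eq_mul]
  rw [Finset.sum_mul]
  exact Finset.sum_congr rfl fun k _ => by ring

end Stmt5Aux

open Stmt5Aux in
/-- the two rows of a right invertible `2 × n` matrix (`n ≥ 3`) are
elementarily equivalent. -/
theorem stmt5 {R : Type*} [CommRing R] [Nontrivial R] {n : ℕ} (hn : 3 ≤ n)
    (α : Matrix (Fin 2) (Fin n) R) (hα : ∃ β : Matrix (Fin n) (Fin 2) R, α * β = 1) :
    ∃ ε ∈ ElemGroup R n, Matrix.vecMul (α 0) ε = α 1 := by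
  obtain ⟨β, hβ⟩ := hα
  set a : Fin n → R := α 0 with ha
  set b : Fin n → R := α 1 with hb
  set p : Fin n → R := fun k => β k 0 with hp
  set q : Fin n → R := fun k => β k 1 with hq
  have hent : ∀ i j : Fin 2, ∑ k : Fin n, α i k * β k j = (1 : Matrix (Fin 2) (Fin 2) R) i j := by
    intro i j
    have := congrFun (congrFun hβ i) j
    rwa [Matrix.mul_apply] at this
  have hap : a ⬝ᵥ p = 1 := by
    have := hent 0 0; simpa [dotProduct, ha, hp, Matrix.one_apply] using this
  have haq : a ⬝ᵥ q = 0 := by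
    have := hent 0 1; simpa [dotProduct, ha, hq, Matrix.one_apply] using this
  have hbp : b ⬝ᵥ p = 0 := by
    have := hent 1 0; simpa [dotProduct, hb, hp, Matrix.one_apply] using this
  have hbq : b ⬝ᵥ q = 1 := by
    have := hent 1 1; simpa [dotProduct, hb, hq, Matrix.one_apply] using this
  refine ⟨(1 + vecMulVec p b) * (1 + vecMulVec (-q) a), ?_, ?_⟩
  · apply mul_mem
    · exact memC hn p b q hbp hbq
    · exact memC hn (-q) a p (by simp [haq]) hap
  · rw [← Matrix.vecMul_vecMul]
    have h1 : Matrix.vecMul a (1 + vecMulVec p b) = a + b := by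
      rw [Matrix.vecMul_add, Matrix.vecMul_one, vecMul_vmv, hap, one_smul]
    rw [h1]
    rw [Matrix.vecMul_add, Matrix.vecMul_one, vecMul_vmv]
    have h2 : (a + b) ⬝ᵥ (-q) = -1 := by
      rw [add_dotProduct, dotProduct_neg, dotProduct_neg, haq, hbq]; ring
    rw [h2]
    funext l
    simp only [Pi.add_apply, Pi.smul_apply, smul_eq_mul, hb]
    ring
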